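/- Cut-off density lemma: let E be a locally convex Hausdorff space (or a Banach space), k ∈ ℕ₀ ∪ {∞}, Ω ⊂ ℝ^d open, V^k a locally bounded family of weights, and suppose CV^k_0(Ω,E) satisfies the cut-off criterion: for every f ∈ CV^k_0(Ω,E), j, l, α there is δ > 0 such that for all ε > 0 there is a compact K ⊂ Ω with K + closed ball of radius δ ⊆ Ω and |f|_{Ω\K, j, l, α} < ε. Then C^k_c(Ω,E) is dense in CV^k_0(Ω,E). Specifically, for f, j, l, α, ε as above there is ψ ∈ C^∞_c(Ω) with 0 ≤ ψ ≤ 1, ψ = 1 near K, |∂^β ψ| ≤ C_β δ^{−|β|}, and then |f − ψf|_{j,l,α} ≤ (1 + C_{l,δ}) |f|_{Ω\K,j,l,α} where C_{l,δ} := sup_{|β|≤l} Σ_{γ≤β} (β choose γ) C_{β−γ} δ^{−|β−γ|}. -/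

import Mathlib

open scoped BigOperators Pointwise

noncomputable def pD {d : ℕ} {E : Type*} [NormedAddCommGroup E] [NormedSpace ℝ E]
    (i : Fin d) (f : EuclideanSpace ℝ (Fin d) → E) : EuclideanSpace ℝ (Fin d) → E :=
  fun x => fderiv ℝ f x (EuclideanSpace.single i (1 : ℝ))

/-- Iterated partial derivative `∂^β f` for a multi-index `β : Fin d → ℕ`. -/
noncomputable def mD {d : ℕ} {E : Type*} [NormedAddCommGroup E] [NormedSpace ℝ E]
    (β : Fin d → ℕ) (f : EuclideanSpace ℝ (Fin d) → E) : EuclideanSpace ℝ (Fin d) → E :=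
  Fin.foldr d (fun i g => (pD i)^[β i] g) f

open MeasureTheory

section Machinery

variable {d : ℕ} {E : Type*} [NormedAddCommGroup E] [NormedSpace ℝ E]

/-- Iterated partial derivative along a list of directions. -/
noncomputable def Dl (s : List (Fin d)) (f : EuclideanSpace ℝ (Fin d) → E) :
    EuclideanSpace ℝ (Fin d) → E :=
  s.foldr (fun i g => pD i g) f

@[simp] lemma Dl_nil (f : EuclideanSpace ℝ (Fin d) → E) : Dl [] f = f := rfl

@[simp] lemma Dl_cons (i : Fin d) (s : List (Fin d)) (f : EuclideanSpace ℝ (Fin d) → E) :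
    Dl (i :: s) f = pD i (Dl s f) := rfl

lemma Dl_append (s t : List (Fin d)) (f : EuclideanSpace ℝ (Fin d) → E) :
    Dl (s ++ t) f = Dl s (Dl t f) := by
  induction s with
  | nil => rfl
  | cons i s ih => simp [Dl_cons, ih]

lemma Dl_replicate (n : ℕ) (i : Fin d) (f : EuclideanSpace ℝ (Fin d) → E) :
    Dl (List.replicate n i) f = (pD i)^[n] f := by
  induction n with
  | zero => rfl
  | succ n ih =>
      rw [List.replicate_succ, Dl_cons, ih, Function.iterate_succ_apply']

/-- `repList L β` is the concatenation of `β i` copies of `i` over `i ∈ L`. -/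
def repList (L : List (Fin d)) (β : Fin d → ℕ) : List (Fin d) :=
  match L with
  | [] => []
  | i :: L => List.replicate (β i) i ++ repList L β

lemma repList_congr {L : List (Fin d)} {β γ : Fin d → ℕ} (h : ∀ i ∈ L, β i = γ i) :
    repList L β = repList L γ := by
  induction L with
  | nil => rfl
  | cons i L ih =>
      simp only [repList]
      rw [h i (by simp), ih (fun j hj => h j (by simp [hj]))]

lemma length_repList (L : List (Fin d)) (β : Fin d → ℕ) :
    (repList L β).length = (L.map β).sum := by
  induction L with
  | nil => rfl
  | cons i L ih => simp [repList, ih]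

/-- The canonical sorted list of directions attached to a multi-index. -/
def sList (β : Fin d → ℕ) : List (Fin d) := repList (List.finRange d) β

lemma length_sList (β : Fin d → ℕ) : (sList β).length = ∑ n, β n := by
  rw [sList, length_repList, Fin.sum_univ_def]

lemma mD_eq_Dl (β : Fin d → ℕ) (f : EuclideanSpace ℝ (Fin d) → E) :
    mD β f = Dl (sList β) f := by
  rw [mD, Fin.foldr_eq_foldr_finRange, sList]
  induction (List.finRange d) with
  | nil => rfl
  | cons i L ih =>
      simp only [List.foldr_cons, repList, Dl_append, Dl_replicate, ih]

lemma sublist_repList {L : List (Fin d)} (hL : L.Nodup) {β : Fin d → ℕ}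
    {u : List (Fin d)} (hu : u.Sublist (repList L β)) :
    ∃ γ : Fin d → ℕ, (∀ i, γ i ≤ β i) ∧ u = repList L γ := by
  induction L generalizing u with
  | nil =>
      refine ⟨fun _ => 0, fun i => Nat.zero_le _, ?_⟩
      simpa [repList] using List.sublist_nil.1 hu
  | cons i L ih =>
      rw [List.nodup_cons] at hL
      rw [repList, List.sublist_append_iff] at hu
      obtain ⟨u₁, u₂, rfl, h₁, h₂⟩ := hu
      obtain ⟨c, hc, rfl⟩ := List.sublist_replicate_iff.1 h₁
      obtain ⟨γ', hγ', hu₂⟩ := ih hL.2 h₂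
      refine ⟨Function.update γ' i c, ?_, ?_⟩
      · intro j
        by_cases hj : j = i
        · subst hj; simpa using hc
        · simpa [Function.update_of_ne hj] using hγ' j
      · rw [repList, Function.update_self, hu₂]
        congr 1
        refine repList_congr (fun j hj => ?_)
        have hji : j ≠ i := fun h => hL.1 (h ▸ hj)
        exact (Function.update_of_ne hji _ _).symm

lemma sublist_sList {β : Fin d → ℕ} {u : List (Fin d)} (hu : u.Sublist (sList β)) :
    ∃ γ : Fin d → ℕ, (∀ i, γ i ≤ β i) ∧ u = sList γ :=
  sublist_repList (List.nodup_finRange d) hu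

end Machinery

section Machinery2

variable {d : ℕ} {E : Type*} [NormedAddCommGroup E] [NormedSpace ℝ E]

lemma contDiff_pD (i : Fin d) {f : EuclideanSpace ℝ (Fin d) → E}
    (hf : ContDiff ℝ (⊤ : ℕ∞) f) : ContDiff ℝ (⊤ : ℕ∞) (pD i f) := by
  have h1 : ContDiff ℝ (⊤ : ℕ∞) (fderiv ℝ f) := hf.fderiv_right (le_refl _)
  exact h1.clm_apply contDiff_const

lemma contDiff_Dl {f : EuclideanSpace ℝ (Fin d) → E} (hf : ContDiff ℝ (⊤ : ℕ∞) f)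
    (s : List (Fin d)) : ContDiff ℝ (⊤ : ℕ∞) (Dl s f) := by
  induction s with
  | nil => exact hf
  | cons i s ih => exact contDiff_pD i ih

lemma contDiffOn_Dl {k : ℕ∞} {Ω : Set (EuclideanSpace ℝ (Fin d))} (hΩ : IsOpen Ω)
    {f : EuclideanSpace ℝ (Fin d) → E} (hf : ContDiffOn ℝ k f Ω) :
    ∀ (s : List (Fin d)) (m : ℕ), ((s.length + m : ℕ) : ℕ∞) ≤ k →
      ContDiffOn ℝ (m : ℕ∞) (Dl s f) Ω := by
  intro s
  induction s with
  | nil =>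
      intro m hm
      have h : (m : ℕ∞) ≤ k := by simpa using hm
      exact hf.of_le (by exact_mod_cast h)
  | cons i s ih =>
      intro m hm
      have h1 : ContDiffOn ℝ ((m + 1 : ℕ) : ℕ∞) (Dl s f) Ω := by
        apply ih
        refine le_trans (le_of_eq ?_) hm
        simp only [List.length_cons]
        push_cast
        ring
      have h2 : ContDiffOn ℝ (m : ℕ∞) (fderiv ℝ (Dl s f)) Ω := by
        apply h1.fderiv_of_isOpen hΩ
        push_cast
        exact le_rfl
      exact h2.clm_apply contDiffOn_const

end Machinery2

section Machinery3

variable {d : ℕ} {E : Type*} [NormedAddCommGroup E] [NormedSpace ℝ E]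

lemma differentiableAt_Dl {k : ℕ∞} {Ω : Set (EuclideanSpace ℝ (Fin d))} (hΩ : IsOpen Ω)
    {f : EuclideanSpace ℝ (Fin d) → E} (hf : ContDiffOn ℝ k f Ω)
    {s : List (Fin d)} (hs : ((s.length + 1 : ℕ) : ℕ∞) ≤ k) {x : EuclideanSpace ℝ (Fin d)}
    (hx : x ∈ Ω) : DifferentiableAt ℝ (Dl s f) x := by
  have h1 : ContDiffOn ℝ ((1 : ℕ) : ℕ∞) (Dl s f) Ω := contDiffOn_Dl hΩ hf s 1 hs
  have h2 : DifferentiableOn ℝ (Dl s f) Ω := h1.differentiableOn (by simp)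
  exact h2.differentiableAt (hΩ.mem_nhds hx)

lemma pD_congr_nhds {i : Fin d} {f g : EuclideanSpace ℝ (Fin d) → E}
    {x : EuclideanSpace ℝ (Fin d)} (h : f =ᶠ[nhds x] g) : pD i f x = pD i g x := by
  unfold pD
  rw [h.fderiv_eq]

lemma Dl_congr_on {U : Set (EuclideanSpace ℝ (Fin d))} (hU : IsOpen U)
    {f g : EuclideanSpace ℝ (Fin d) → E} (h : ∀ y ∈ U, f y = g y) :
    ∀ (s : List (Fin d)), ∀ x ∈ U, Dl s f x = Dl s g x := by
  intro s
  induction s with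
  | nil => exact h
  | cons i s ih =>
      intro x hx
      refine pD_congr_nhds (Filter.eventuallyEq_of_mem (hU.mem_nhds hx) (fun y hy => ih y hy))

lemma Dl_zero (s : List (Fin d)) : Dl s (fun _ => (0 : E)) = fun _ => (0 : E) := by
  induction s with
  | nil => rfl
  | cons i s ih =>
      rw [Dl_cons, ih]
      funext x
      simp [pD, fderiv_const]

lemma pD_add {i : Fin d} {f g : EuclideanSpace ℝ (Fin d) → E} {x : EuclideanSpace ℝ (Fin d)}
    (hf : DifferentiableAt ℝ f x) (hg : DifferentiableAt ℝ g x) :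
    pD i (fun y => f y + g y) x = pD i f x + pD i g x := by
  unfold pD
  rw [fderiv_fun_add hf hg]
  rfl

lemma pD_sub {i : Fin d} {f g : EuclideanSpace ℝ (Fin d) → E} {x : EuclideanSpace ℝ (Fin d)}
    (hf : DifferentiableAt ℝ f x) (hg : DifferentiableAt ℝ g x) :
    pD i (fun y => f y - g y) x = pD i f x - pD i g x := by
  unfold pD
  rw [fderiv_fun_sub hf hg]
  rfl

lemma pD_smul {i : Fin d} {c : EuclideanSpace ℝ (Fin d) → ℝ} {f : EuclideanSpace ℝ (Fin d) → E}
    {x : EuclideanSpace ℝ (Fin d)}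
    (hc : DifferentiableAt ℝ c x) (hf : DifferentiableAt ℝ f x) :
    pD i (fun y => c y • f y) x = c x • pD i f x + pD i c x • f x := by
  unfold pD
  rw [fderiv_fun_smul hc hf]
  simp

lemma differentiableAt_listSum {ι : Type*} (L : List ι) (F : ι → EuclideanSpace ℝ (Fin d) → E)
    {x : EuclideanSpace ℝ (Fin d)} (h : ∀ a ∈ L, DifferentiableAt ℝ (F a) x) :
    DifferentiableAt ℝ (fun y => (L.map (fun a => F a y)).sum) x := by
  induction L with
  | nil => simpa using differentiableAt_const (0 : E)
  | cons a L ih =>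
      simp only [List.map_cons, List.sum_cons]
      exact (h a (by simp)).add (ih (fun b hb => h b (by simp [hb])))

lemma pD_listSum (i : Fin d) {ι : Type*} (L : List ι) (F : ι → EuclideanSpace ℝ (Fin d) → E)
    {x : EuclideanSpace ℝ (Fin d)} (h : ∀ a ∈ L, DifferentiableAt ℝ (F a) x) :
    pD i (fun y => (L.map (fun a => F a y)).sum) x = (L.map (fun a => pD i (F a) x)).sum := by
  induction L with
  | nil => simp [pD, fderiv_const]
  | cons a L ih =>
      simp only [List.map_cons, List.sum_cons]
      rw [← ih (fun b hb => h b (by simp [hb]))]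
      exact pD_add (h a (by simp)) (differentiableAt_listSum L F (fun b hb => h b (by simp [hb])))

lemma list_sum_add (L : List (List (Fin d) × List (Fin d)))
    (F G : List (Fin d) × List (Fin d) → E) :
    (L.map (fun p => F p + G p)).sum = (L.map F).sum + (L.map G).sum := by
  induction L with
  | nil => simp
  | cons p L ih => simp [ih]; abel

lemma norm_list_sum_le (L : List (List (Fin d) × List (Fin d)))
    (F : List (Fin d) × List (Fin d) → E) :
    ‖(L.map F).sum‖ ≤ (L.map (fun p => ‖F p‖)).sum := by
  induction L with
  | nil => simp
  | cons p L ih =>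
      simp only [List.map_cons, List.sum_cons]
      exact le_trans (norm_add_le _ _) (by linarith)

lemma list_sum_mul_right (L : List (List (Fin d) × List (Fin d)))
    (F : List (Fin d) × List (Fin d) → ℝ) (c : ℝ) :
    (L.map F).sum * c = (L.map (fun p => F p * c)).sum := by
  induction L with
  | nil => simp
  | cons p L ih => simp [add_mul, ih]

end Machinery3

section Machinery4

variable {d : ℕ} {E : Type*} [NormedAddCommGroup E] [NormedSpace ℝ E]

/-- All ways of splitting a list of derivatives between two factors. -/
def splits : List (Fin d) → List (List (Fin d) × List (Fin d))
  | [] => [([], [])]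
  | i :: s => ((splits s).map fun p => (i :: p.1, p.2)) ++ ((splits s).map fun p => (p.1, i :: p.2))

lemma mem_splits {s : List (Fin d)} {p : List (Fin d) × List (Fin d)} (hp : p ∈ splits s) :
    p.1.Sublist s ∧ p.2.Sublist s := by
  induction s generalizing p with
  | nil =>
      simp only [splits, List.mem_singleton] at hp
      subst hp; exact ⟨List.Sublist.refl _, List.Sublist.refl _⟩
  | cons i s ih =>
      simp only [splits, List.mem_append, List.mem_map] at hp
      rcases hp with ⟨q, hq, rfl⟩ | ⟨q, hq, rfl⟩
      · exact ⟨(ih hq).1.cons₂ i, (ih hq).2.cons i⟩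
      · exact ⟨(ih hq).1.cons i, (ih hq).2.cons₂ i⟩

lemma length_splits (s : List (Fin d)) : (splits s).length = 2 ^ s.length := by
  induction s with
  | nil => rfl
  | cons i s ih => simp [splits, ih, List.length_append, pow_succ]; ring

lemma Dl_leibniz {k : ℕ∞} {Ω : Set (EuclideanSpace ℝ (Fin d))} (hΩ : IsOpen Ω)
    {ψ : EuclideanSpace ℝ (Fin d) → ℝ} (hψ : ContDiff ℝ (⊤ : ℕ∞) ψ)
    {f : EuclideanSpace ℝ (Fin d) → E} (hf : ContDiffOn ℝ k f Ω) :
    ∀ (s : List (Fin d)), ((s.length : ℕ) : ℕ∞) ≤ k → ∀ x ∈ Ω,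
      Dl s (fun z => ψ z • f z) x
        = ((splits s).map fun p => Dl p.1 ψ x • Dl p.2 f x).sum := by
  intro s
  induction s with
  | nil => intro _ x _; simp [splits]
  | cons i s ih =>
      intro hlen x hx
      have hlen' : ((s.length : ℕ) : ℕ∞) ≤ k :=
        le_trans (by exact_mod_cast Nat.le_succ _) hlen
      have hstep : ∀ p ∈ splits s, DifferentiableAt ℝ
          (fun y => Dl p.1 ψ y • Dl p.2 f y) x := by
        intro p hp
        have h1 : DifferentiableAt ℝ (Dl p.1 ψ) x :=
          ((contDiff_Dl hψ p.1).differentiable (by simp)).differentiableAt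
        have h2 : DifferentiableAt ℝ (Dl p.2 f) x := by
          refine differentiableAt_Dl hΩ hf ?_ hx
          have : p.2.length + 1 ≤ s.length + 1 :=
            Nat.succ_le_succ (mem_splits hp).2.length_le
          calc ((p.2.length + 1 : ℕ) : ℕ∞) ≤ ((s.length + 1 : ℕ) : ℕ∞) := by exact_mod_cast this
            _ ≤ k := by simpa using hlen
        exact h1.smul h2
      -- rewrite the inner function on a neighborhood of x
      have hcong : Dl s (fun z => ψ z • f z) =ᶠ[nhds x]
          (fun y => ((splits s).map fun p => Dl p.1 ψ y • Dl p.2 f y).sum) :=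
        Filter.eventuallyEq_of_mem (hΩ.mem_nhds hx) (fun y hy => ih hlen' y hy)
      rw [Dl_cons, pD_congr_nhds hcong,
        pD_listSum i (splits s) (fun p => fun y => Dl p.1 ψ y • Dl p.2 f y) hstep]
      have hterm : ∀ p ∈ splits s,
          pD i (fun y => Dl p.1 ψ y • Dl p.2 f y) x
            = Dl p.1 ψ x • Dl (i :: p.2) f x + Dl (i :: p.1) ψ x • Dl p.2 f x := by
        intro p hp
        have h1 : DifferentiableAt ℝ (Dl p.1 ψ) x :=
          ((contDiff_Dl hψ p.1).differentiable (by simp)).differentiableAt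
        have h2 : DifferentiableAt ℝ (Dl p.2 f) x := by
          refine differentiableAt_Dl hΩ hf ?_ hx
          have : p.2.length + 1 ≤ s.length + 1 :=
            Nat.succ_le_succ (mem_splits hp).2.length_le
          calc ((p.2.length + 1 : ℕ) : ℕ∞) ≤ ((s.length + 1 : ℕ) : ℕ∞) := by exact_mod_cast this
            _ ≤ k := by simpa using hlen
        rw [pD_smul h1 h2]
        rfl
      rw [List.map_congr_left hterm, list_sum_add]
      simp only [splits, List.map_append, List.sum_append, List.map_map]
      rw [add_comm]
      rfl

lemma Dl_sub_on {k : ℕ∞} {Ω : Set (EuclideanSpace ℝ (Fin d))} (hΩ : IsOpen Ω)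
    {f g : EuclideanSpace ℝ (Fin d) → E} (hf : ContDiffOn ℝ k f Ω) (hg : ContDiffOn ℝ k g Ω) :
    ∀ (s : List (Fin d)), ((s.length : ℕ) : ℕ∞) ≤ k → ∀ x ∈ Ω,
      Dl s (fun z => f z - g z) x = Dl s f x - Dl s g x := by
  intro s
  induction s with
  | nil => intro _ x _; rfl
  | cons i s ih =>
      intro hlen x hx
      have hlen' : ((s.length : ℕ) : ℕ∞) ≤ k :=
        le_trans (by exact_mod_cast Nat.le_succ _) hlen
      have hs1 : ((s.length + 1 : ℕ) : ℕ∞) ≤ k := by simpa using hlen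
      have hcong : Dl s (fun z => f z - g z) =ᶠ[nhds x]
          (fun y => Dl s f y - Dl s g y) :=
        Filter.eventuallyEq_of_mem (hΩ.mem_nhds hx) (fun y hy => ih hlen' y hy)
      rw [Dl_cons, pD_congr_nhds hcong,
        pD_sub (differentiableAt_Dl hΩ hf hs1 hx) (differentiableAt_Dl hΩ hg hs1 hx)]
      rfl

end Machinery4

section Cutoff

open scoped Convolution
open Metric Set ContinuousLinearMap

variable {d : ℕ}

lemma hasCompactSupport_pD (i : Fin d) {h : EuclideanSpace ℝ (Fin d) → ℝ}
    (hcs : HasCompactSupport h) : HasCompactSupport (pD i h) :=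
  hcs.fderiv_apply (𝕜 := ℝ) (EuclideanSpace.single i 1)

lemma pD_convolution (i : Fin d) {h : EuclideanSpace ℝ (Fin d) → ℝ}
    (hsm : ContDiff ℝ (⊤ : ℕ∞) h) (hcs : HasCompactSupport h)
    {χ : EuclideanSpace ℝ (Fin d) → ℝ} (hχ : LocallyIntegrable χ volume) :
    pD i (h ⋆[ContinuousLinearMap.lsmul ℝ ℝ, volume] χ)
      = (pD i h) ⋆[ContinuousLinearMap.lsmul ℝ ℝ, volume] χ := by
  funext x
  have hf1 : ContDiff ℝ 1 h := hsm.of_le (by exact_mod_cast le_top)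
  have hd := (hcs.hasFDerivAt_convolution_left (ContinuousLinearMap.lsmul ℝ ℝ) hf1 hχ x).fderiv
  show fderiv ℝ (h ⋆[ContinuousLinearMap.lsmul ℝ ℝ, volume] χ) x (EuclideanSpace.single i 1) = _
  rw [hd]
  have e1 : (fderiv ℝ h ⋆[(ContinuousLinearMap.lsmul ℝ ℝ).precompL (EuclideanSpace ℝ (Fin d)),
        volume] χ)
      = (χ ⋆[ContinuousLinearMap.precompR (EuclideanSpace ℝ (Fin d))
          (ContinuousLinearMap.lsmul ℝ ℝ).flip, volume] fderiv ℝ h) := convolution_flip _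
  rw [e1]
  rw [convolution_precompR_apply ((ContinuousLinearMap.lsmul ℝ ℝ).flip) hχ
    (hcs.fderiv (𝕜 := ℝ)) (hsm.continuous_fderiv (by simp)) x
    (EuclideanSpace.single i 1)]
  rw [convolution_flip _]
  rfl

lemma Dl_convolution (t : List (Fin d)) {χ : EuclideanSpace ℝ (Fin d) → ℝ}
    (hχ : LocallyIntegrable χ volume) {h : EuclideanSpace ℝ (Fin d) → ℝ}
    (hsm : ContDiff ℝ (⊤ : ℕ∞) h) (hcs : HasCompactSupport h) :
    Dl t (h ⋆[ContinuousLinearMap.lsmul ℝ ℝ, volume] χ)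
        = (Dl t h) ⋆[ContinuousLinearMap.lsmul ℝ ℝ, volume] χ
      ∧ ContDiff ℝ (⊤ : ℕ∞) (Dl t h) ∧ HasCompactSupport (Dl t h) := by
  induction t with
  | nil => exact ⟨rfl, hsm, hcs⟩
  | cons i t ih =>
      obtain ⟨h1, h2, h3⟩ := ih
      refine ⟨?_, contDiff_pD i h2, hasCompactSupport_pD i h3⟩
      rw [Dl_cons, h1, pD_convolution i h2 h3 hχ]
      rfl

lemma norm_convolution_le {h χ : EuclideanSpace ℝ (Fin d) → ℝ} (hh : Continuous h)
    (hcs : HasCompactSupport h) (hχ0 : ∀ y, 0 ≤ χ y) (hχ1 : ∀ y, χ y ≤ 1)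
    (x : EuclideanSpace ℝ (Fin d)) :
    ‖(h ⋆[ContinuousLinearMap.lsmul ℝ ℝ, volume] χ) x‖ ≤ ∫ y, ‖h y‖ := by
  rw [convolution_def]
  refine le_trans (norm_integral_le_integral_norm _) ?_
  refine integral_mono_of_nonneg (Filter.Eventually.of_forall fun t => norm_nonneg _)
    (hh.norm.integrable_of_hasCompactSupport hcs.norm) (Filter.Eventually.of_forall fun t => ?_)
  simp only [ContinuousLinearMap.lsmul_apply, smul_eq_mul, norm_mul]
  have : ‖χ (x - t)‖ ≤ 1 := by
    rw [Real.norm_eq_abs, abs_le]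
    exact ⟨by linarith [hχ0 (x - t)], hχ1 (x - t)⟩
  calc ‖h t‖ * ‖χ (x - t)‖ ≤ ‖h t‖ * 1 := by
        exact mul_le_mul_of_nonneg_left this (norm_nonneg _)
    _ = ‖h t‖ := mul_one _

/-- All lists over `Fin d` of length at most `n`. -/
def allLists (d n : ℕ) : List (List (Fin d)) :=
  match n with
  | 0 => [[]]
  | n+1 => allLists d n ++
      (List.finRange d).foldr (fun i acc => ((allLists d n).map (fun t => i :: t)) ++ acc) []

lemma mem_foldr_append {i : Fin d} {x : List (Fin d)} {L : List (Fin d)}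
    {M : List (List (Fin d))} (hi : i ∈ L) (hx : x ∈ M) :
    (i :: x) ∈ L.foldr (fun i acc => (M.map (fun t => i :: t)) ++ acc) [] := by
  induction L with
  | nil => simp at hi
  | cons j L ih =>
      rcases List.mem_cons.1 hi with rfl | hi
      · exact List.mem_append.2 (Or.inl (List.mem_map.2 ⟨x, hx, rfl⟩))
      · exact List.mem_append.2 (Or.inr (ih hi))

lemma mem_allLists : ∀ (n : ℕ) (t : List (Fin d)), t.length ≤ n → t ∈ allLists d n := by
  intro n
  induction n with
  | zero =>
      intro t ht
      simp only [Nat.le_zero, List.length_eq_zero_iff] at ht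
      simp [allLists, ht]
  | succ n ih =>
      intro t ht
      cases t with
      | nil => exact List.mem_append.2 (Or.inl (ih [] (Nat.zero_le _)))
      | cons i t' =>
          simp only [List.length_cons, Nat.succ_le_succ_iff] at ht
          exact List.mem_append.2 (Or.inr (mem_foldr_append (List.mem_finRange i) (ih t' ht)))

lemma le_foldr_max (B : List (Fin d) → ℝ) :
    ∀ (M : List (List (Fin d))), ∀ t ∈ M, B t ≤ (M.map B).foldr max 0 := by
  intro M
  induction M with
  | nil => intro t ht; simp at ht
  | cons u M ih =>
      intro t ht
      rcases List.mem_cons.1 ht with rfl | ht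
      · exact le_max_left _ _
      · exact le_trans (ih t ht) (le_max_right _ _)

lemma foldr_max_nonneg (B : List (Fin d) → ℝ) :
    ∀ (M : List (List (Fin d))), 0 ≤ (M.map B).foldr max 0 := by
  intro M
  induction M with
  | nil => simp
  | cons u M ih => exact le_trans ih (le_max_right _ _)

end Cutoff

section UniformCutoff

open scoped Convolution
open Metric Set MeasureTheory

variable {d : ℕ}

lemma uniform_cutoff (l : ℕ) {δ : ℝ} (hδ : 0 < δ) :
    ∃ C : ℝ, 0 ≤ C ∧ ∀ (Ω K : Set (EuclideanSpace ℝ (Fin d))), IsCompact K →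
      K + Metric.closedBall 0 δ ⊆ Ω →
      ∃ ψ : EuclideanSpace ℝ (Fin d) → ℝ, ContDiff ℝ (⊤ : ℕ∞) ψ ∧
        HasCompactSupport ψ ∧ tsupport ψ ⊆ Ω ∧ (∀ x, 0 ≤ ψ x ∧ ψ x ≤ 1) ∧
        (∃ U : Set (EuclideanSpace ℝ (Fin d)), IsOpen U ∧ K ⊆ U ∧ ∀ x ∈ U, ψ x = 1) ∧
        (∀ t : List (Fin d), t.length ≤ l → ∀ x, ‖Dl t ψ x‖ ≤ C) := by
  classical
  -- the bump function, depending only on `δ`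
  set ρ : ContDiffBump (0 : EuclideanSpace ℝ (Fin d)) :=
    ⟨δ/4, δ/3, by linarith, by linarith⟩ with hρ
  set ρn : EuclideanSpace ℝ (Fin d) → ℝ := ρ.normed volume with hρn
  have hρsm : ContDiff ℝ (⊤ : ℕ∞) ρn := ρ.contDiff_normed
  have hρcs : HasCompactSupport ρn := ρ.hasCompactSupport_normed (μ := volume)
  -- the uniform constant
  set B : List (Fin d) → ℝ := fun t => ∫ y, ‖Dl t ρn y‖ with hB
  refine ⟨((allLists d l).map B).foldr max 0, foldr_max_nonneg B _, ?_⟩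
  intro Ω K hK hKδ
  -- the compact set thickened a bit, and its indicator
  set A : Set (EuclideanSpace ℝ (Fin d)) := K + Metric.closedBall 0 (δ/2) with hA
  have hAcp : IsCompact A := hK.add (isCompact_closedBall _ _)
  have hχmeas : MeasurableSet A := hAcp.isClosed.measurableSet
  set χ : EuclideanSpace ℝ (Fin d) → ℝ := A.indicator (fun _ => (1:ℝ)) with hχ
  have hχint : Integrable χ volume := by
    rw [hχ, integrable_indicator_iff hχmeas]
    exact integrableOn_const hAcp.measure_lt_top.ne (by simp)
  have hχloc : LocallyIntegrable χ volume := hχint.locallyIntegrable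
  have hχ0 : ∀ y, 0 ≤ χ y := by
    intro y; rw [hχ]; by_cases hy : y ∈ A <;> simp [indicator_apply, hy]
  have hχ1 : ∀ y, χ y ≤ 1 := by
    intro y; rw [hχ]; by_cases hy : y ∈ A <;> simp [indicator_apply, hy]
  set ψ : EuclideanSpace ℝ (Fin d) → ℝ :=
    ρn ⋆[ContinuousLinearMap.lsmul ℝ ℝ, volume] χ with hψ
  have hψsm : ContDiff ℝ (⊤ : ℕ∞) ψ :=
    HasCompactSupport.contDiff_convolution_left _ hρcs hρsm hχloc
  -- support facts
  have hsupp : tsupport ψ ⊆ K + Metric.closedBall 0 δ := by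
    have h1 : Function.support ψ ⊆ K + Metric.closedBall 0 δ := by
      refine le_trans (support_convolution_subset _) ?_
      have h2 : Function.support ρn ⊆ Metric.closedBall 0 (δ/3) := by
        rw [hρn, ρ.support_normed_eq]
        exact ball_subset_closedBall
      have h3 : Function.support χ ⊆ A := support_indicator_subset
      refine le_trans (add_subset_add h2 h3) ?_
      intro z hz
      rw [Set.mem_add] at hz
      obtain ⟨b, hb, a, ha, rfl⟩ := hz
      rw [hA, Set.mem_add] at ha
      obtain ⟨c, hc, b', hb', rfl⟩ := ha
      rw [Set.mem_add]
      refine ⟨c, hc, b + b', ?_, by abel⟩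
      rw [mem_closedBall_zero_iff] at *
      calc ‖b + b'‖ ≤ ‖b‖ + ‖b'‖ := norm_add_le _ _
        _ ≤ δ/3 + δ/2 := add_le_add hb hb'
        _ ≤ δ := by linarith
    have hcl : IsClosed (K + Metric.closedBall 0 δ) :=
      (hK.add (isCompact_closedBall _ _)).isClosed
    exact closure_minimal h1 hcl
  have hψcs : HasCompactSupport ψ :=
    IsCompact.of_isClosed_subset (hK.add (isCompact_closedBall _ _)) (isClosed_tsupport _) hsupp
  -- values
  have hψval : ∀ x, ψ x = ∫ t, ρn t * χ (x - t) := by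
    intro x
    rw [hψ, convolution_def]
    simp [ContinuousLinearMap.lsmul_apply, smul_eq_mul]
  have hψ0 : ∀ x, 0 ≤ ψ x := by
    intro x
    rw [hψval]
    exact integral_nonneg fun t => mul_nonneg (ρ.nonneg_normed t) (hχ0 _)
  have hψ1 : ∀ x, ψ x ≤ 1 := by
    intro x
    rw [hψval]
    calc ∫ t, ρn t * χ (x - t) ≤ ∫ t, ρn t := by
          refine integral_mono_of_nonneg
            (Filter.Eventually.of_forall fun t => mul_nonneg (ρ.nonneg_normed t) (hχ0 _))
            (ρ.integrable_normed) (Filter.Eventually.of_forall fun t => ?_)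
          calc ρn t * χ (x - t) ≤ ρn t * 1 :=
                mul_le_mul_of_nonneg_left (hχ1 _) (ρ.nonneg_normed t)
            _ = ρn t := mul_one _
      _ = 1 := ρ.integral_normed
  -- equal to 1 on a neighborhood of K
  have hone : ∀ x ∈ K + Metric.ball 0 (δ/24), ψ x = 1 := by
    intro x hx
    rw [Set.mem_add] at hx
    obtain ⟨c, hc, b, hb, rfl⟩ := hx
    rw [mem_ball_zero_iff] at hb
    have hxA : ∀ y ∈ ball (c + b) ρ.rOut, y ∈ A := by
      intro y hy
      rw [mem_ball] at hy
      rw [hA, Set.mem_add]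
      refine ⟨c, hc, b + (y - (c + b)), ?_, by abel⟩
      rw [mem_closedBall_zero_iff]
      have hr : ρ.rOut = δ/3 := rfl
      have : dist y (c + b) = ‖y - (c + b)‖ := dist_eq_norm _ _
      calc ‖b + (y - (c + b))‖ ≤ ‖b‖ + ‖y - (c + b)‖ := norm_add_le _ _
        _ ≤ δ/24 + δ/3 := by
            refine add_le_add (le_of_lt hb) ?_
            rw [← this]; rw [hr] at hy; linarith
        _ ≤ δ/2 := by linarith
    have hconst : ∀ y ∈ ball (c + b) ρ.rOut, χ y = χ (c + b) := by
      intro y hy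
      have h1 : χ y = 1 := by rw [hχ, indicator_apply, if_pos (hxA y hy)]
      have h2 : χ (c + b) = 1 := by
        rw [hχ, indicator_apply, if_pos]
        exact hxA _ (mem_ball_self (by rw [show ρ.rOut = δ/3 from rfl]; linarith))
      rw [h1, h2]
    have := ρ.normed_convolution_eq_right (μ := volume) hconst
    rw [hψ, this, hχ, indicator_apply, if_pos]
    exact hxA _ (mem_ball_self (by rw [show ρ.rOut = δ/3 from rfl]; linarith))
  refine ⟨ψ, hψsm, hψcs, le_trans hsupp hKδ, fun x => ⟨hψ0 x, hψ1 x⟩, ?_, ?_⟩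
  · refine ⟨K + Metric.ball 0 (δ/24), ?_, ?_, hone⟩
    · exact IsOpen.add_left isOpen_ball
    · intro x hx
      rw [Set.mem_add]
      exact ⟨x, hx, 0, mem_ball_self (by linarith), add_zero x⟩
  · intro t ht x
    obtain ⟨h1, h2, h3⟩ := Dl_convolution t hχloc hρsm hρcs
    rw [hψ, h1]
    refine le_trans (norm_convolution_le (h2.continuous) h3 hχ0 hχ1 x) ?_
    exact le_foldr_max B _ t (mem_allLists l t ht)

end UniformCutoff

/-- Membership in the weighted space `CV^k_0(Ω,E)`: `C^k` on `Ω`, finite weighted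
seminorms, and vanishing at infinity when weighted. -/
def MemCV0 {d : ℕ} {E : Type*} [NormedAddCommGroup E] [NormedSpace ℝ E] {J : Type*}
    (k : ℕ∞) (Ω : Set (EuclideanSpace ℝ (Fin d)))
    (ν : J → ℕ → EuclideanSpace ℝ (Fin d) → ℝ)
    (f : EuclideanSpace ℝ (Fin d) → E) : Prop :=
  ContDiffOn ℝ k f Ω ∧
  (∀ (j : J) (l : ℕ), (l : ℕ∞) ≤ k →
    ∃ M : ℝ, ∀ x ∈ Ω, ∀ β : Fin d → ℕ, (∑ n, β n) ≤ l → ‖mD β f x‖ * ν j l x ≤ M) ∧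
  (∀ (j : J) (l : ℕ), (l : ℕ∞) ≤ k → ∀ ε > (0:ℝ),
    ∃ K : Set (EuclideanSpace ℝ (Fin d)), IsCompact K ∧ K ⊆ Ω ∧
      ∀ x ∈ Ω \ K, ∀ β : Fin d → ℕ, (∑ n, β n) ≤ l → ‖mD β f x‖ * ν j l x < ε)

/-- cut-off density lemma: if the weights are locally bounded and
`CV^k_0(Ω,E)` satisfies the cut-off criterion, then every `f ∈ CV^k_0(Ω,E)` can be
approximated in each weighted seminorm by compactly supported functions, of the
specific form `ψ·f` with a smooth cut-off `0 ≤ ψ ≤ 1`. -/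
theorem stmt14 {d : ℕ} {E : Type*} [NormedAddCommGroup E] [NormedSpace ℝ E]
    {J : Type*} (k : ℕ∞)
    (Ω : Set (EuclideanSpace ℝ (Fin d))) (hΩ : IsOpen Ω)
    (ν : J → ℕ → EuclideanSpace ℝ (Fin d) → ℝ)
    (hν_nonneg : ∀ j l x, 0 ≤ ν j l x)
    (hν_locbdd : ∀ K : Set (EuclideanSpace ℝ (Fin d)), K ⊆ Ω → IsCompact K →
      ∀ (j : J) (l : ℕ), ∃ M : ℝ, ∀ x ∈ K, ν j l x ≤ M)
    (hcutoff : ∀ f : EuclideanSpace ℝ (Fin d) → E, MemCV0 k Ω ν f →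
      ∀ (j : J) (l : ℕ), (l : ℕ∞) ≤ k → ∃ δ > (0:ℝ), ∀ ε > (0:ℝ),
        ∃ K : Set (EuclideanSpace ℝ (Fin d)), IsCompact K ∧ K ⊆ Ω ∧
          K + Metric.closedBall 0 δ ⊆ Ω ∧
          ∀ x ∈ Ω \ K, ∀ β : Fin d → ℕ, (∑ n, β n) ≤ l →
            ‖mD β f x‖ * ν j l x < ε) :
    ∀ f : EuclideanSpace ℝ (Fin d) → E, MemCV0 k Ω ν f →
      ∀ (j : J) (l : ℕ), (l : ℕ∞) ≤ k → ∀ ε > (0:ℝ),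
        ∃ ψ : EuclideanSpace ℝ (Fin d) → ℝ, ContDiff ℝ (⊤ : ℕ∞) ψ ∧
          HasCompactSupport ψ ∧ tsupport ψ ⊆ Ω ∧
          (∀ x, 0 ≤ ψ x ∧ ψ x ≤ 1) ∧
          ∀ x ∈ Ω, ∀ β : Fin d → ℕ, (∑ n, β n) ≤ l →
            ‖mD β (fun z => f z - ψ z • f z) x‖ * ν j l x ≤ ε := by
  intro f hf j l hl ε hε
  obtain ⟨hfC, hbdd, hvan⟩ := hf
  obtain ⟨δ, hδ, H⟩ := hcutoff f ⟨hfC, hbdd, hvan⟩ j l hl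
  obtain ⟨C, hC0, hcut⟩ := uniform_cutoff (d := d) l hδ
  have hD0 : (0:ℝ) < 1 + 2 ^ l * C := by positivity
  set ε' : ℝ := ε / (1 + 2 ^ l * C) with hε'def
  have hε'0 : 0 < ε' := by positivity
  obtain ⟨K, hKcp, hKΩ, hKδ, hsmall⟩ := H ε' hε'0
  obtain ⟨ψ, hψsm, hψcs, hψsupp, hψ01, ⟨U, hUopen, hKU, hU1⟩, hψbd⟩ := hcut Ω K hKcp hKδ
  refine ⟨ψ, hψsm, hψcs, hψsupp, hψ01, ?_⟩
  intro x hx β hβ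
  by_cases hxU : x ∈ U
  · -- the function vanishes on a neighborhood of `x`
    have hzero : ∀ y ∈ U, (fun z => f z - ψ z • f z) y = (fun _ => (0:E)) y := by
      intro y hy
      simp [hU1 y hy]
    have h0 : mD β (fun z => f z - ψ z • f z) x = 0 := by
      rw [mD_eq_Dl, Dl_congr_on hUopen hzero (sList β) x hxU, Dl_zero]
    rw [h0, norm_zero, zero_mul]
    exact le_of_lt hε
  · have hxK : x ∈ Ω \ K := ⟨hx, fun h => hxU (hKU h)⟩
    have hslen : (sList β).length = ∑ n, β n := length_sList β
    have hsl : (sList β).length ≤ l := by rw [hslen]; exact hβ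
    have hsk : (((sList β).length : ℕ) : ℕ∞) ≤ k :=
      le_trans (by exact_mod_cast hsl) hl
    have hψk : ContDiffOn ℝ k ψ Ω := by
      refine (hψsm.of_le ?_).contDiffOn
      exact_mod_cast le_top
    have hψf : ContDiffOn ℝ k (fun z => ψ z • f z) Ω := hψk.smul hfC
    have hsub := Dl_sub_on hΩ hfC hψf (sList β) hsk x hx
    rw [mD_eq_Dl, hsub]
    have hleib := Dl_leibniz hΩ hψsm hfC (sList β) hsk x hx
    -- first term
    have hT1 : ‖Dl (sList β) f x‖ * ν j l x ≤ ε' := by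
      rw [← mD_eq_Dl]
      exact le_of_lt (hsmall x hxK β hβ)
    -- second term
    have hT2 : ‖Dl (sList β) (fun z => ψ z • f z) x‖ * ν j l x ≤ 2 ^ l * (C * ε') := by
      rw [hleib]
      have h1 : ‖((splits (sList β)).map fun p => Dl p.1 ψ x • Dl p.2 f x).sum‖ * ν j l x
          ≤ ((splits (sList β)).map fun p => ‖Dl p.1 ψ x • Dl p.2 f x‖).sum * ν j l x :=
        mul_le_mul_of_nonneg_right (norm_list_sum_le _ _) (hν_nonneg j l x)
      refine le_trans h1 ?_
      rw [list_sum_mul_right]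
      have h2 : ∀ r ∈ (splits (sList β)).map
          (fun p => ‖Dl p.1 ψ x • Dl p.2 f x‖ * ν j l x), r ≤ C * ε' := by
        intro r hr
        obtain ⟨p, hp, rfl⟩ := List.mem_map.1 hr
        obtain ⟨hp1, hp2⟩ := mem_splits hp
        obtain ⟨γ, hγ, hpγ⟩ := sublist_sList hp2
        have hf2 : ‖Dl p.2 f x‖ * ν j l x ≤ ε' := by
          rw [hpγ, ← mD_eq_Dl]
          refine le_of_lt (hsmall x hxK γ ?_)
          exact le_trans (Finset.sum_le_sum fun i _ => hγ i) hβ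
        have hψ2 : ‖Dl p.1 ψ x‖ ≤ C :=
          hψbd p.1 (le_trans hp1.length_le hsl) x
        calc ‖Dl p.1 ψ x • Dl p.2 f x‖ * ν j l x
            = ‖Dl p.1 ψ x‖ * (‖Dl p.2 f x‖ * ν j l x) := by
              rw [norm_smul, mul_assoc]
          _ ≤ C * ε' := by
              refine mul_le_mul hψ2 hf2 ?_ hC0
              exact mul_nonneg (norm_nonneg _) (hν_nonneg j l x)
      refine le_trans (List.sum_le_card_nsmul _ _ h2) ?_
      rw [List.length_map, length_splits, nsmul_eq_mul]
      refine mul_le_mul_of_nonneg_right ?_ (mul_nonneg hC0 (le_of_lt hε'0))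
      push_cast
      exact pow_le_pow_right₀ one_le_two hsl
    calc ‖Dl (sList β) f x - Dl (sList β) (fun z => ψ z • f z) x‖ * ν j l x
        ≤ (‖Dl (sList β) f x‖ + ‖Dl (sList β) (fun z => ψ z • f z) x‖) * ν j l x :=
          mul_le_mul_of_nonneg_right (norm_sub_le _ _) (hν_nonneg j l x)
      _ = ‖Dl (sList β) f x‖ * ν j l x
          + ‖Dl (sList β) (fun z => ψ z • f z) x‖ * ν j l x := add_mul _ _ _
      _ ≤ ε' + 2 ^ l * (C * ε') := add_le_add hT1 hT2
      _ = (1 + 2 ^ l * C) * ε' := by ring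
      _ = ε := by
          rw [hε'def]
          field_simp
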